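/- Consider a linearized (DC) power flow instance with supply–demand vector β : V → ℝ. There exist f : E → ℝ and φ : V → ℝ solving the power flow equations for β if and only if for every bus v, the sum of β over all buses in the connected component of v equals 0. -/

import Mathlib

open scoped Classical
open scoped RealInnerProductSpace

/-- A pair `(f, φ)` solves the linearized (DC) power flow equations for the
supply–demand vector `β` on the grid given by `tail`, `head`, `x`. -/
def IsSolution {E V : Type*} [Fintype E] (tail head : E → V) (x : E → ℝ)
    (β : V → ℝ) (f : E → ℝ) (φ : V → ℝ) : Prop :=
  (∀ v : V, (∑ e ∈ Finset.univ.filter (fun e => tail e = v), f e)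
      - (∑ e ∈ Finset.univ.filter (fun e => head e = v), f e) = β v) ∧
  (∀ e : E, φ (tail e) - φ (head e) - x e * f e = 0)


noncomputable section PFaux
namespace PFaux

variable {E V : Type*} [Fintype E] [Fintype V]

def divm (tail head : E → V) : (E → ℝ) →ₗ[ℝ] EuclideanSpace ℝ V where
  toFun f := WithLp.toLp 2 (fun v => (∑ e ∈ Finset.univ.filter (fun e => tail e = v), f e)
      - (∑ e ∈ Finset.univ.filter (fun e => head e = v), f e))
  map_add' f g := by
    ext v
    simp [Finset.sum_add_distrib]
    ring
  map_smul' c f := by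
    ext v
    simp [← Finset.mul_sum]
    ring

def dmap (tail head : E → V) (x : E → ℝ) : EuclideanSpace ℝ V →ₗ[ℝ] (E → ℝ) where
  toFun φ := fun e => (φ (tail e) - φ (head e)) / x e
  map_add' φ ψ := by
    funext e
    show ((φ + ψ) (tail e) - (φ + ψ) (head e)) / x e = _
    simp [add_div]
    ring
  map_smul' c φ := by
    funext e
    show ((c • φ) (tail e) - (c • φ) (head e)) / x e = _
    simp [mul_div_assoc]
    ring

def Lap (tail head : E → V) (x : E → ℝ) : EuclideanSpace ℝ V →ₗ[ℝ] EuclideanSpace ℝ V :=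
  (divm tail head).comp (dmap tail head x)

lemma inner_divm (tail head : E → V) (ψ : EuclideanSpace ℝ V) (f : E → ℝ) :
    ⟪ψ, divm tail head f⟫ = ∑ e, f e * (ψ (tail e) - ψ (head e)) := by
  have h1 : ∀ g : E → V, (∑ v, ψ v * ∑ e ∈ Finset.univ.filter (fun e => g e = v), f e)
      = ∑ e, ψ (g e) * f e := by
    intro g
    rw [← Finset.sum_fiberwise Finset.univ g (fun e => ψ (g e) * f e)]
    refine Finset.sum_congr rfl fun v _ => ?_
    rw [Finset.mul_sum]
    refine Finset.sum_congr rfl fun e he => ?_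
    rw [Finset.mem_filter] at he
    rw [he.2]
  rw [PiLp.inner_apply]
  simp only [RCLike.inner_apply, conj_trivial]
  rw [Finset.sum_congr rfl fun v _ => mul_comm (divm tail head f v) (ψ v)]
  have : ∀ v, ψ v * divm tail head f v
      = ψ v * ∑ e ∈ Finset.univ.filter (fun e => tail e = v), f e
        - ψ v * ∑ e ∈ Finset.univ.filter (fun e => head e = v), f e := by
    intro v
    show ψ v * ((∑ e ∈ Finset.univ.filter (fun e => tail e = v), f e)
      - (∑ e ∈ Finset.univ.filter (fun e => head e = v), f e)) = _
    ring
  rw [Finset.sum_congr rfl fun v _ => this v, Finset.sum_sub_distrib, h1 tail, h1 head,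
    ← Finset.sum_sub_distrib]
  exact Finset.sum_congr rfl fun e _ => by ring

lemma inner_Lap (tail head : E → V) (x : E → ℝ) (ψ φ : EuclideanSpace ℝ V) :
    ⟪ψ, Lap tail head x φ⟫
      = ∑ e, (φ (tail e) - φ (head e)) * (ψ (tail e) - ψ (head e)) / x e := by
  rw [show Lap tail head x φ = divm tail head (dmap tail head x φ) from rfl, inner_divm]
  exact Finset.sum_congr rfl fun e _ => by
    show (φ (tail e) - φ (head e)) / x e * (ψ (tail e) - ψ (head e)) = _
    ring

lemma Lap_symm (tail head : E → V) (x : E → ℝ) (ψ φ : EuclideanSpace ℝ V) :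
    ⟪Lap tail head x ψ, φ⟫ = ⟪ψ, Lap tail head x φ⟫ := by
  rw [real_inner_comm, inner_Lap, inner_Lap]
  exact Finset.sum_congr rfl fun e _ => by ring

/-- functions constant on components -/
def Kc (tail head : E → V) : Submodule ℝ (EuclideanSpace ℝ V) where
  carrier := {ψ | ∀ a b, Relation.EqvGen (fun a b => ∃ e : E, tail e = a ∧ head e = b) a b
    → ψ a = ψ b}
  add_mem' := by
    intro φ ψ hφ hψ a b hab
    show φ a + ψ a = φ b + ψ b
    rw [hφ a b hab, hψ a b hab]
  zero_mem' := by intro a b _; rfl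
  smul_mem' := by
    intro c φ hφ a b hab
    show c * φ a = c * φ b
    rw [hφ a b hab]

lemma ker_Lap (tail head : E → V) (x : E → ℝ) (hx : ∀ e, 0 < x e) :
    LinearMap.ker (Lap tail head x) = Kc tail head := by
  apply le_antisymm
  · intro φ hφ
    rw [LinearMap.mem_ker] at hφ
    have h0 : ⟪φ, Lap tail head x φ⟫ = 0 := by rw [hφ, inner_zero_right]
    rw [inner_Lap] at h0
    have hterm : ∀ e : E, (φ (tail e) - φ (head e)) * (φ (tail e) - φ (head e)) / x e = 0 := by
      intro e
      have hnn : ∀ e ∈ (Finset.univ : Finset E),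
          0 ≤ (φ (tail e) - φ (head e)) * (φ (tail e) - φ (head e)) / x e := fun e _ =>
        div_nonneg (mul_self_nonneg _) (hx e).le
      exact (Finset.sum_eq_zero_iff_of_nonneg hnn).1 h0 e (Finset.mem_univ e)
    have hedge : ∀ e : E, φ (tail e) = φ (head e) := by
      intro e
      have := hterm e
      rw [div_eq_zero_iff] at this
      rcases this with h | h
      · have := mul_self_eq_zero.1 h
        linarith
      · exact absurd h (hx e).ne'
    intro a b hab
    induction hab with
    | rel a b h => obtain ⟨e, he1, he2⟩ := h; rw [← he1, ← he2]; exact hedge e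
    | refl a => rfl
    | symm a b _ ih => exact ih.symm
    | trans a b c _ _ ih1 ih2 => exact ih1.trans ih2
  · intro φ hφ
    rw [LinearMap.mem_ker]
    have hd : dmap tail head x φ = 0 := by
      funext e
      show (φ (tail e) - φ (head e)) / x e = 0
      rw [hφ (tail e) (head e) (Relation.EqvGen.rel _ _ ⟨e, rfl, rfl⟩), sub_self, zero_div]
    show divm tail head (dmap tail head x φ) = 0
    rw [hd, map_zero]

lemma range_Lap (tail head : E → V) (x : E → ℝ) (hx : ∀ e, 0 < x e) :
    LinearMap.range (Lap tail head x) = (Kc tail head)ᗮ := by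
  have hle : LinearMap.range (Lap tail head x) ≤ (Kc tail head)ᗮ := by
    rintro _ ⟨φ, rfl⟩
    rw [Submodule.mem_orthogonal]
    intro ψ hψ
    rw [← ker_Lap tail head x hx] at hψ
    rw [← Lap_symm, LinearMap.mem_ker.1 hψ, inner_zero_left]
  apply Submodule.eq_of_le_of_finrank_le hle
  have h1 := Submodule.finrank_add_finrank_orthogonal (Kc tail head)
  have h2 := LinearMap.finrank_range_add_finrank_ker (Lap tail head x)
  rw [ker_Lap tail head x hx] at h2
  omega


section Glue
variable (tail head : E → V)

abbrev rel : V → V → Prop := fun a b => ∃ e : E, tail e = a ∧ head e = b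

abbrev r : V → V → Prop := Relation.EqvGen (rel tail head)

lemma r_equiv : Equivalence (r tail head) := Relation.EqvGen.is_equivalence _

lemma mem_Kc_orth_iff (β : EuclideanSpace ℝ V) :
    β ∈ (Kc tail head)ᗮ ↔
      ∀ v : V, ∑ w ∈ Finset.univ.filter (fun w => r tail head v w), β w = 0 := by
  constructor
  · intro h v
    set ψ : EuclideanSpace ℝ V := WithLp.toLp 2 (fun w => if r tail head v w then (1:ℝ) else 0) with hψdef
    have hψK : ψ ∈ Kc tail head := by
      intro a b hab
      have : r tail head v a ↔ r tail head v b :=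
        ⟨fun h1 => (r_equiv tail head).trans h1 hab,
         fun h1 => (r_equiv tail head).trans h1 ((r_equiv tail head).symm hab)⟩
      simp only [hψdef, PiLp.toLp_apply, this]
    have h0 : ⟪ψ, β⟫ = 0 := (Submodule.mem_orthogonal _ _).1 h ψ hψK
    rw [PiLp.inner_apply] at h0
    simp only [RCLike.inner_apply, conj_trivial] at h0
    rw [← h0, Finset.sum_filter]
    refine Finset.sum_congr rfl fun w _ => ?_
    by_cases hw : r tail head v w <;> simp [hψdef, hw]
  · intro h
    rw [Submodule.mem_orthogonal]
    intro ψ hψ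
    rw [PiLp.inner_apply]
    simp only [RCLike.inner_apply, conj_trivial]
    set s : Setoid V := ⟨r tail head, r_equiv tail head⟩ with hs
    rw [Finset.sum_congr rfl fun v _ => mul_comm (β v) (ψ v)]
    rw [← Finset.sum_fiberwise Finset.univ (Quotient.mk s) (fun v => ψ v * β v)]
    refine Finset.sum_eq_zero fun q _ => ?_
    induction q using Quotient.ind with
    | _ u =>
      have hfib : Finset.univ.filter (fun v => Quotient.mk s v = Quotient.mk s u)
          = Finset.univ.filter (fun v => r tail head u v) := by
        refine Finset.filter_congr fun v _ => ?_
        rw [Quotient.eq]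
        exact ⟨fun hh => (r_equiv tail head).symm hh, fun hh => (r_equiv tail head).symm hh⟩
      rw [hfib]
      have hconst : ∀ v ∈ Finset.univ.filter (fun v => r tail head u v),
          ψ v * β v = ψ u * β v := by
        intro v hv
        rw [Finset.mem_filter] at hv
        rw [hψ u v hv.2]
      rw [Finset.sum_congr rfl hconst, ← Finset.mul_sum, h u, mul_zero]

end Glue
end PFaux
end PFaux

open PFaux in
theorem PFaux.flow_existence_iff' {E V : Type*} [Fintype E] [Fintype V]
    (tail head : E → V) (x : E → ℝ) (hx : ∀ e, 0 < x e) (β : V → ℝ) :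
    (∃ (f : E → ℝ) (φ : V → ℝ),
      ((∀ v : V, (∑ e ∈ Finset.univ.filter (fun e => tail e = v), f e)
      - (∑ e ∈ Finset.univ.filter (fun e => head e = v), f e) = β v) ∧
      (∀ e : E, φ (tail e) - φ (head e) - x e * f e = 0))) ↔
      (∀ v : V, ∑ w ∈ Finset.univ.filter
          (fun w => Relation.EqvGen (fun a b => ∃ e : E, tail e = a ∧ head e = b) v w),
            β w = 0) := by
  constructor
  · rintro ⟨f, φ, h1, _⟩ v
    have hrw : ∀ w ∈ Finset.univ.filter (fun w => r tail head v w),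
        β w = (∑ e ∈ Finset.univ.filter (fun e => tail e = w), f e)
          - (∑ e ∈ Finset.univ.filter (fun e => head e = w), f e) :=
      fun w _ => (h1 w).symm
    rw [Finset.sum_congr rfl hrw, Finset.sum_sub_distrib,
      Finset.sum_fiberwise_eq_sum_filter Finset.univ _ tail f,
      Finset.sum_fiberwise_eq_sum_filter Finset.univ _ head f]
    have hset : Finset.univ.filter (fun e => tail e ∈ Finset.univ.filter (fun w => r tail head v w))
        = Finset.univ.filter (fun e => head e ∈ Finset.univ.filter (fun w => r tail head v w)) := by
      refine Finset.filter_congr fun e _ => ?_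
      simp only [Finset.mem_filter, Finset.mem_univ, true_and]
      have hth : r tail head (tail e) (head e) := Relation.EqvGen.rel _ _ ⟨e, rfl, rfl⟩
      exact ⟨fun hh => (r_equiv tail head).trans hh hth,
        fun hh => (r_equiv tail head).trans hh ((r_equiv tail head).symm hth)⟩
    rw [hset, sub_self]
  · intro h
    have hβ : (WithLp.toLp 2 β : EuclideanSpace ℝ V) ∈ LinearMap.range (Lap tail head x) := by
      rw [range_Lap tail head x hx, mem_Kc_orth_iff]
      exact h
    obtain ⟨φ, hφ⟩ := hβ
    refine ⟨dmap tail head x φ, φ, fun v => ?_, fun e => ?_⟩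
    · exact congrFun (congrArg (fun g : EuclideanSpace ℝ V => (g : V → ℝ)) hφ) v
    · show φ (tail e) - φ (head e) - x e * ((φ (tail e) - φ (head e)) / x e) = 0
      rw [mul_div_assoc']
      rw [mul_comm, mul_div_assoc, div_self (hx e).ne', mul_one, sub_self]

/-- The linearized power flow system for `β` is solvable if and only if `β`
sums to zero over every connected component (components being the classes of
the equivalence relation generated by the endpoint pairs of the lines). -/
theorem flow_existence_iff {E V : Type*} [Fintype E] [Fintype V]
    (tail head : E → V) (x : E → ℝ) (hx : ∀ e, 0 < x e) (β : V → ℝ) :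
    (∃ (f : E → ℝ) (φ : V → ℝ), IsSolution tail head x β f φ) ↔
      (∀ v : V, ∑ w ∈ Finset.univ.filter
          (fun w => Relation.EqvGen (fun a b => ∃ e : E, tail e = a ∧ head e = b) v w),
            β w = 0) := by
  exact PFaux.flow_existence_iff' tail head x hx β
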